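/- Let G be a simple graph on n vertices. If there exists a vertex v of G such that the sum of the degrees deg(u) over all neighbors u of v is strictly greater than 2n, then G contains a cycle of length 4. -/

import Mathlib

/-- A simple graph `G` contains a cycle of length `m`: there exist `m` pairwise
distinct vertices `v₀, …, v_{m-1}` such that `vᵢ` is adjacent to `v_{i+1}`,
indices taken modulo `m`. -/
def SimpleGraph.HasCycleOfLength {V : Type*} (G : SimpleGraph V) (m : ℕ) : Prop :=
  ∃ f : ZMod m → V, Function.Injective f ∧ ∀ i : ZMod m, G.Adj (f i) (f (i + 1))

/-- If some vertex `v` satisfies `∑_{u ∈ N(v)} deg(u) > 2n`, then `G` contains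
a 4-cycle. -/
theorem four_cycle_of_dense_neighborhood {V : Type*} [Fintype V]
    (G : SimpleGraph V) [DecidableRel G.Adj] (v : V)
    (h : 2 * Fintype.card V < ∑ u ∈ G.neighborFinset v, G.degree u) :
    G.HasCycleOfLength 4 := by
  classical
  set n := Fintype.card V with hn
  set t : V → Finset V := fun u => (G.neighborFinset u).erase v with ht
  have hdegv : G.degree v ≤ n := by
    exact Finset.card_le_univ (G.neighborFinset v)
  have herase : ∀ u ∈ G.neighborFinset v, (t u).card + 1 = G.degree u := by
    intro u hu
    rw [SimpleGraph.mem_neighborFinset] at hu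
    have hv : v ∈ G.neighborFinset u := by
      rw [SimpleGraph.mem_neighborFinset]; exact hu.symm
    exact Finset.card_erase_add_one hv
  have hsum1 : (∑ u ∈ G.neighborFinset v, (t u).card) + G.degree v
      = ∑ u ∈ G.neighborFinset v, G.degree u := by
    rw [← Finset.sum_congr rfl herase, Finset.sum_add_distrib, Finset.sum_const,
      smul_eq_mul, mul_one, SimpleGraph.degree]
  have key : n < ∑ u ∈ G.neighborFinset v, (t u).card := by omega
  -- double counting
  have hdc : ∑ u ∈ G.neighborFinset v, (t u).card
      = ∑ w : V, ((G.neighborFinset v).filter (fun u => w ∈ t u)).card := by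
    have h1 : ∀ u, (t u).card = ∑ w : V, if w ∈ t u then 1 else 0 := by
      intro u
      rw [← Finset.filter_univ_mem (t u), Finset.card_filter]
      simp
    simp only [h1, Finset.card_filter]
    exact Finset.sum_comm
  -- pigeonhole
  have hex : ∃ w : V, 1 < ((G.neighborFinset v).filter (fun u => w ∈ t u)).card := by
    by_contra hc
    push_neg at hc
    have : ∑ w : V, ((G.neighborFinset v).filter (fun u => w ∈ t u)).card ≤ n := by
      calc _ ≤ ∑ _w : V, 1 := Finset.sum_le_sum fun w _ => hc w
        _ = n := by simp [hn]
    omega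
  obtain ⟨w, hw⟩ := hex
  obtain ⟨u1, hu1, u2, hu2, hne⟩ := Finset.one_lt_card.1 hw
  simp only [Finset.mem_filter, SimpleGraph.mem_neighborFinset, ht, Finset.mem_erase] at hu1 hu2
  obtain ⟨hvu1, hwv, hwu1⟩ := hu1
  obtain ⟨hvu2, -, hwu2⟩ := hu2
  -- build the 4-cycle v, u1, w, u2
  refine ⟨fun i => ![v, u1, w, u2] i, ?_, ?_⟩
  · have hd : ∀ i j : Fin 4, ![v, u1, w, u2] i = ![v, u1, w, u2] j → i = j := by
      intro i j hij
      fin_cases i <;> fin_cases j <;>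
        simp_all [G.ne_of_adj hvu1, G.ne_of_adj hvu2, G.ne_of_adj hwu1, G.ne_of_adj hwu2]
    intro i j hij
    exact hd i j hij
  · intro i
    fin_cases i <;>
      simp_all [SimpleGraph.adj_comm, show ((0:ZMod 4)+1) = 1 from rfl,
        show ((1:ZMod 4)+1) = 2 from rfl, show ((2:ZMod 4)+1) = 3 from rfl,
        show ((3:ZMod 4)+1) = 0 from rfl] <;>
      first | exact hvu1 | exact hwu1.symm | exact hwu2 | exact hvu2.symm
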